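/- arXiv:2310.20376 — 4 statements merged into one kernel-verified Lean document; each statement's English description precedes it below -/
import Mathlib

section
/- For every Λ > 0, the double integral ∫_0^1 ∫_0^1 (1 + Λ x₁ x₂) e^(-Λ(1 - x₁x₂)) dx₁ dx₂ equals (1 - e^(-Λ))/Λ. -/
open Real intervalIntegral

lemma inner_int (Λ x₁ : ℝ) :
    (∫ x₂ in (0:ℝ)..1, (1 + Λ * x₁ * x₂) * Real.exp (-Λ * (1 - x₁ * x₂)))
      = Real.exp (-Λ * (1 - x₁)) := by
  have h : ∀ x₂ ∈ Set.uIcc (0:ℝ) 1,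
      HasDerivAt (fun t => t * Real.exp (-Λ * (1 - x₁ * t)))
        ((1 + Λ * x₁ * x₂) * Real.exp (-Λ * (1 - x₁ * x₂))) x₂ := by
    intro t _
    have h1 : HasDerivAt (fun s : ℝ => -Λ * (1 - x₁ * s)) (Λ * x₁) t := by
      have := ((hasDerivAt_id t).const_mul x₁).const_sub (1:ℝ)
      have := this.const_mul (-Λ)
      exact this.congr_deriv (by ring)
    have h2 : HasDerivAt (fun s : ℝ => Real.exp (-Λ * (1 - x₁ * s)))
        (Real.exp (-Λ * (1 - x₁ * t)) * (Λ * x₁)) t := h1.exp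
    have h3 := (hasDerivAt_id t).mul h2
    exact h3.congr_deriv (by simp only [id]; ring)
  have hcont : IntervalIntegrable
      (fun x₂ => (1 + Λ * x₁ * x₂) * Real.exp (-Λ * (1 - x₁ * x₂)))
      MeasureTheory.volume 0 1 := by
    apply Continuous.intervalIntegrable; continuity
  have := intervalIntegral.integral_eq_sub_of_hasDerivAt h hcont
  simpa using this

/-- For every `Λ > 0`,
`∫_0^1 ∫_0^1 (1 + Λ x₁ x₂) e^(-Λ(1 - x₁x₂)) dx₂ dx₁ = (1 - e^(-Λ))/Λ`. -/
theorem stmt_7 (Λ : ℝ) (hΛ : 0 < Λ) :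
    (∫ x₁ in (0:ℝ)..1, ∫ x₂ in (0:ℝ)..1,
        (1 + Λ * x₁ * x₂) * Real.exp (-Λ * (1 - x₁ * x₂)))
      = (1 - Real.exp (-Λ)) / Λ := by
  have hne : Λ ≠ 0 := hΛ.ne'
  have h1 : (∫ x₁ in (0:ℝ)..1, ∫ x₂ in (0:ℝ)..1,
        (1 + Λ * x₁ * x₂) * Real.exp (-Λ * (1 - x₁ * x₂)))
      = ∫ x₁ in (0:ℝ)..1, Real.exp (-Λ * (1 - x₁)) := by
    apply intervalIntegral.integral_congr
    intro x _; exact inner_int Λ x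
  rw [h1]
  have h : ∀ x ∈ Set.uIcc (0:ℝ) 1,
      HasDerivAt (fun t => Real.exp (-Λ * (1 - t)) / Λ)
        (Real.exp (-Λ * (1 - x))) x := by
    intro x _
    have h1 : HasDerivAt (fun s : ℝ => -Λ * (1 - s)) Λ x := by
      have := ((hasDerivAt_id x).const_sub (1:ℝ)).const_mul (-Λ)
      exact this.congr_deriv (by ring)
    have h2 := h1.exp.div_const Λ
    refine h2.congr_deriv ?_
    field_simp
  have hcont : IntervalIntegrable (fun x => Real.exp (-Λ * (1 - x)))
      MeasureTheory.volume 0 1 := by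
    apply Continuous.intervalIntegrable; continuity
  rw [intervalIntegral.integral_eq_sub_of_hasDerivAt h hcont]
  simp
  ring
end

section
/- For every Λ > 0, one has -e^(-Λ) ∫_0^1 (1 + Λx) e^(Λx) log(x) dx = (1 - e^(-Λ))/Λ. -/
open Real intervalIntegral

lemma log_intInt : IntervalIntegrable Real.log MeasureTheory.volume 0 1 := by
  rw [intervalIntegrable_iff_integrableOn_Ioc_of_le zero_le_one]
  have hg : MeasureTheory.IntegrableOn (fun x : ℝ => 2 * x ^ (-(1/2) : ℝ))
      (Set.Ioc 0 1) MeasureTheory.volume := by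
    have := (intervalIntegrable_rpow' (a := (0:ℝ)) (b := 1)
      (r := -(1/2)) (by norm_num)).const_mul 2
    rwa [intervalIntegrable_iff_integrableOn_Ioc_of_le zero_le_one] at this
  refine hg.integrable.mono Real.measurable_log.aestronglyMeasurable ?_
  filter_upwards [MeasureTheory.ae_restrict_mem measurableSet_Ioc] with x hx
  obtain ⟨hx0, hx1⟩ := hx
  have hlog : Real.log x ≤ 0 := Real.log_nonpos hx0.le hx1
  have h1 : -(1/2) * Real.log x = Real.log (x ^ (-(1/2) : ℝ)) := (Real.log_rpow hx0 _).symm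
  have h2 : Real.log (x ^ (-(1/2) : ℝ)) ≤ x ^ (-(1/2) : ℝ) - 1 :=
    Real.log_le_sub_one_of_pos (Real.rpow_pos_of_pos hx0 _)
  have hpos : (0:ℝ) < x ^ (-(1/2) : ℝ) := Real.rpow_pos_of_pos hx0 _
  rw [Real.norm_eq_abs, Real.norm_eq_abs, abs_of_nonpos hlog, abs_of_pos (by positivity)]
  nlinarith

/-- For every `Λ > 0`,
`-e^(-Λ) ∫_0^1 (1 + Λx) e^(Λx) log x dx = (1 - e^(-Λ))/Λ`. -/
theorem stmt_10 (Λ : ℝ) (hΛ : 0 < Λ) :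
    -Real.exp (-Λ) * ∫ x in (0:ℝ)..1, (1 + Λ * x) * Real.exp (Λ * x) * Real.log x
      = (1 - Real.exp (-Λ)) / Λ := by
  set F : ℝ → ℝ := fun x => x * Real.exp (Λ * x) * Real.log x - Real.exp (Λ * x) / Λ with hF
  have hderiv : ∀ x ∈ Set.Ioo (0:ℝ) 1,
      HasDerivAt F ((1 + Λ * x) * Real.exp (Λ * x) * Real.log x) x := by
    intro x hx
    have hx0 : (0:ℝ) < x := hx.1
    have h1 : HasDerivAt (fun x => Real.exp (Λ * x)) (Λ * Real.exp (Λ * x)) x := by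
      have := ((hasDerivAt_id' x).const_mul Λ).exp
      simpa [mul_comm] using this
    have h2 : HasDerivAt (fun x : ℝ => x * Real.exp (Λ * x))
        (Real.exp (Λ * x) + x * (Λ * Real.exp (Λ * x))) x := by
      refine ((hasDerivAt_id' x).mul h1).congr_deriv ?_
      simp
    have h3 : HasDerivAt Real.log (1 / x) x := by
      simpa [one_div] using Real.hasDerivAt_log hx0.ne'
    have h4 := (h2.mul h3).sub (h1.div_const Λ)
    have hxx : x * Real.exp (Λ * x) * (1 / x) = Real.exp (Λ * x) := by
      field_simp
    have hΛΛ : Λ * Real.exp (Λ * x) / Λ = Real.exp (Λ * x) := by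
      field_simp
    refine h4.congr_deriv ?_
    rw [hxx, hΛΛ]
    ring
  have hint : IntervalIntegrable (fun x => (1 + Λ * x) * Real.exp (Λ * x) * Real.log x)
      MeasureTheory.volume 0 1 := by
    exact log_intInt.continuousOn_mul (by fun_prop)
  have ha : Filter.Tendsto F (nhdsWithin 0 (Set.Ioi 0)) (nhds (-(1/Λ))) := by
    have h1 : Filter.Tendsto (fun x : ℝ => Real.log x * x) (nhdsWithin 0 (Set.Ioi 0)) (nhds 0) := by
      have := tendsto_log_mul_rpow_nhdsGT_zero (r := 1) one_pos
      simpa using this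
    have h2 : Filter.Tendsto (fun x : ℝ => Real.exp (Λ * x)) (nhdsWithin 0 (Set.Ioi 0))
        (nhds 1) := by
      have : Filter.Tendsto (fun x : ℝ => Real.exp (Λ * x)) (nhds 0) (nhds 1) := by
        have : ContinuousAt (fun x : ℝ => Real.exp (Λ * x)) 0 := by fun_prop
        simpa using this.tendsto
      exact this.mono_left nhdsWithin_le_nhds
    have := ((h1.mul h2).sub (h2.div_const Λ))
    simpa [hF, mul_comm, mul_assoc, mul_left_comm] using this
  have hb : Filter.Tendsto F (nhdsWithin 1 (Set.Iio 1)) (nhds (-(Real.exp Λ / Λ))) := by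
    have hc : ContinuousAt F 1 := by
      apply ContinuousAt.sub
      · exact (continuousAt_id.mul (by fun_prop)).mul
          (Real.continuousAt_log one_ne_zero)
      · fun_prop
    have := (hc.continuousWithinAt (s := Set.Iio 1)).tendsto
    simpa [hF] using this
  have key := intervalIntegral.integral_eq_sub_of_hasDerivAt_of_tendsto
    (f := F) zero_lt_one hderiv hint ha hb
  rw [key]
  rw [Real.exp_neg]
  have he : Real.exp Λ ≠ 0 := (Real.exp_pos Λ).ne'
  field_simp
  ring
end

section
/- Define I(γ,Λ) = ∫_0^1 (1 + Λx) e^(-Λ(1-x)) (1 - x^(1/γ)) dx for γ, Λ > 0. Then lim_{γ → ∞} (γ+1) I(γ,Λ) = (1 - e^(-Λ))/Λ. -/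
open Real Filter MeasureTheory Set

lemma log_integrableOn : IntegrableOn Real.log (Set.Ioc (0:ℝ) 1) := by
  have h : IntervalIntegrable (fun x : ℝ => x ^ (-(1/2) : ℝ)) volume 0 1 :=
    intervalIntegral.intervalIntegrable_rpow' (by norm_num)
  rw [intervalIntegrable_iff_integrableOn_Ioc_of_le zero_le_one] at h
  refine ((h.const_mul 2).mono' Real.measurable_log.aestronglyMeasurable ?_)
  filter_upwards [ae_restrict_mem measurableSet_Ioc] with x hx
  have hx0 : 0 < x := hx.1
  have hx1 : x ≤ 1 := hx.2
  have hlogle : Real.log x ≤ 0 := Real.log_nonpos hx0.le hx1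
  have key : -Real.log x ≤ 2 * x ^ (-(1/2) : ℝ) := by
    have h1 : Real.log (x ^ (-(1/2) : ℝ)) ≤ x ^ (-(1/2) : ℝ) - 1 :=
      Real.log_le_sub_one_of_pos (Real.rpow_pos_of_pos hx0 _)
    rw [Real.log_rpow hx0] at h1
    nlinarith [Real.rpow_pos_of_pos hx0 (-(1/2) : ℝ)]
  rw [Real.norm_eq_abs, abs_of_nonpos hlogle]
  exact key

lemma aux_integral (Λ : ℝ) (hΛ : 0 < Λ) :
    ∫ x in (0:ℝ)..1, (1 + Λ * x) * Real.exp (-Λ * (1 - x)) * (-Real.log x)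
      = (1 - Real.exp (-Λ)) / Λ := by
  set G : ℝ → ℝ := fun x => Real.exp (Λ * (x - 1)) * (1 / Λ - x * Real.log x) with hG
  have hcont : ContinuousOn G (Set.Icc 0 1) := by
    apply Continuous.continuousOn
    exact (Real.continuous_exp.comp (by continuity)).mul
      (continuous_const.sub Real.continuous_mul_log)
  have hderiv : ∀ x ∈ Set.Ioo (0:ℝ) 1,
      HasDerivAt G ((1 + Λ * x) * Real.exp (-Λ * (1 - x)) * (-Real.log x)) x := by
    intro x hx
    have h1 : HasDerivAt (fun x : ℝ => Λ * (x - 1)) Λ x := by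
      simpa using ((hasDerivAt_id x).sub_const 1).const_mul Λ
    have he : HasDerivAt (fun x : ℝ => Real.exp (Λ * (x - 1)))
        (Real.exp (Λ * (x - 1)) * Λ) x := h1.exp
    have h2 : HasDerivAt (fun x : ℝ => 1 / Λ - x * Real.log x)
        (-(Real.log x + 1)) x := by
      simpa using (Real.hasDerivAt_mul_log hx.1.ne').const_sub (1 / Λ)
    have := he.mul h2
    convert this using 1
    · rfl
    · rfl
    · rfl
    have hexp : Real.exp (-Λ * (1 - x)) = Real.exp (Λ * (x - 1)) := by ring_nf
    rw [hexp]
    field_simp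
    ring
  have hint : IntervalIntegrable
      (fun x => (1 + Λ * x) * Real.exp (-Λ * (1 - x)) * (-Real.log x)) volume 0 1 := by
    rw [intervalIntegrable_iff_integrableOn_Ioc_of_le zero_le_one]
    refine ((log_integrableOn.neg.const_mul (1 + Λ)).mono' ?_ ?_)
    · exact (((continuous_const.add (continuous_const.mul continuous_id)).mul
        (Real.continuous_exp.comp (by continuity))).aestronglyMeasurable.mul
        Real.measurable_log.neg.aestronglyMeasurable)
    · filter_upwards [ae_restrict_mem measurableSet_Ioc] with x hx
      have hx0 : 0 < x := hx.1
      have hx1 : x ≤ 1 := hx.2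
      have hlog : Real.log x ≤ 0 := Real.log_nonpos hx0.le hx1
      have hA : 0 ≤ (1 + Λ * x) * Real.exp (-Λ * (1 - x)) := by positivity
      have hAle : (1 + Λ * x) * Real.exp (-Λ * (1 - x)) ≤ 1 + Λ := by
        have h1 : Real.exp (-Λ * (1 - x)) ≤ 1 := by
          apply Real.exp_le_one_iff.mpr; nlinarith
        calc (1 + Λ * x) * Real.exp (-Λ * (1 - x)) ≤ (1 + Λ * x) * 1 := by
              apply mul_le_mul_of_nonneg_left h1; nlinarith
          _ ≤ 1 + Λ := by nlinarith
      rw [Real.norm_eq_abs, abs_of_nonneg (by nlinarith)]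
      simp only [Pi.neg_apply]
      nlinarith [mul_le_mul_of_nonneg_right hAle (neg_nonneg.mpr hlog)]
  have := intervalIntegral.integral_eq_sub_of_hasDerivAt_of_le zero_le_one hcont hderiv hint
  rw [this, hG]
  simp [Real.log_zero, Real.log_one, Real.exp_zero]
  field_simp

lemma key_tendsto {x : ℝ} (hx0 : 0 < x) (hx1 : x ≤ 1) :
    Tendsto (fun γ : ℝ => (γ + 1) * (1 - x ^ (1 / γ))) atTop (nhds (-Real.log x)) := by
  set c : ℝ := Real.log x with hc
  have h1 : Tendsto (fun t : ℝ => (1 - Real.exp (c * t)) / t) (nhdsWithin 0 {0}ᶜ)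
      (nhds (-c)) := by
    have hd : HasDerivAt (fun t : ℝ => Real.exp (c * t)) c 0 := by
      simpa using ((hasDerivAt_id (0:ℝ)).const_mul c).exp
    have := (hasDerivAt_iff_tendsto_slope.mp hd).neg
    apply this.congr
    intro t
    simp [slope_def_field, Real.exp_zero]
    ring
  have h2 : Tendsto (fun γ : ℝ => 1 / γ) atTop (nhdsWithin 0 {0}ᶜ) := by
    have h := tendsto_inv_atTop_nhdsGT_zero (𝕜 := ℝ)
    refine (h.mono_right (nhdsWithin_mono _ ?_)).congr (fun γ => (one_div γ).symm)
    intro y hy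
    exact ne_of_gt hy
  have h3 : Tendsto (fun γ : ℝ => (γ + 1) * (1 / γ)) atTop (nhds 1) := by
    have h : Tendsto (fun γ : ℝ => 1 + 1 / γ) atTop (nhds (1 + 0)) :=
      tendsto_const_nhds.add (tendsto_inv_atTop_zero.congr fun γ => (one_div γ).symm)
    rw [add_zero] at h
    apply h.congr'
    filter_upwards [eventually_gt_atTop (0:ℝ)] with γ hγ
    field_simp
  have h4 := h3.mul (h1.comp h2)
  rw [one_mul] at h4
  apply h4.congr'
  filter_upwards [eventually_gt_atTop (0:ℝ)] with γ hγ
  have hγ0 : (1:ℝ) / γ ≠ 0 := by positivity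
  have hrpow : x ^ (1 / γ) = Real.exp (c * (1 / γ)) := by
    rw [Real.rpow_def_of_pos hx0, hc]
  simp only [Function.comp]
  rw [hrpow]
  field_simp

/-- With `I(γ,Λ) = ∫_0^1 (1+Λx) e^(-Λ(1-x)) (1 - x^(1/γ)) dx`, one has
`lim_{γ → ∞} (γ+1) I(γ,Λ) = (1 - e^(-Λ))/Λ`. -/
theorem stmt_11 (Λ : ℝ) (hΛ : 0 < Λ) :
    Tendsto
      (fun γ : ℝ => (γ + 1) *
        ∫ x in (0:ℝ)..1, (1 + Λ * x) * Real.exp (-Λ * (1 - x)) * (1 - x ^ (1 / γ)))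
      atTop (nhds ((1 - Real.exp (-Λ)) / Λ)) := by
  have hL : ((1 - Real.exp (-Λ)) / Λ)
      = ∫ x in Set.Ioc (0:ℝ) 1, (1 + Λ * x) * Real.exp (-Λ * (1 - x)) * (-Real.log x) := by
    rw [← intervalIntegral.integral_of_le zero_le_one, aux_integral Λ hΛ]
  rw [hL]
  have heq : ∀ γ : ℝ, (γ + 1) *
      ∫ x in (0:ℝ)..1, (1 + Λ * x) * Real.exp (-Λ * (1 - x)) * (1 - x ^ (1 / γ))
      = ∫ x in Set.Ioc (0:ℝ) 1,
          (γ + 1) * ((1 + Λ * x) * Real.exp (-Λ * (1 - x)) * (1 - x ^ (1 / γ))) := by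
    intro γ
    rw [intervalIntegral.integral_of_le zero_le_one, ← integral_const_mul]
  simp only [heq]
  apply tendsto_integral_filter_of_dominated_convergence
    (bound := fun x => (1 + Λ) * (2 * (-Real.log x)))
  · filter_upwards with γ
    apply AEStronglyMeasurable.mul aestronglyMeasurable_const
    apply AEStronglyMeasurable.mul
    · exact ((continuous_const.add (continuous_const.mul continuous_id)).mul
        (Real.continuous_exp.comp (by continuity))).aestronglyMeasurable
    · exact (measurable_const.sub (measurable_id.pow_const _)).aestronglyMeasurable
  · filter_upwards [eventually_ge_atTop (1:ℝ)] with γ hγ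
    filter_upwards [ae_restrict_mem measurableSet_Ioc] with x hx
    have hx0 : 0 < x := hx.1
    have hx1 : x ≤ 1 := hx.2
    have hγ0 : (0:ℝ) < γ := lt_of_lt_of_le zero_lt_one hγ
    have hlog : Real.log x ≤ 0 := Real.log_nonpos hx0.le hx1
    have hr1 : x ^ (1 / γ) ≤ 1 := Real.rpow_le_one hx0.le hx1 (by positivity)
    have hkey : 1 - x ^ (1 / γ) ≤ (1 / γ) * (-Real.log x) := by
      have := Real.add_one_le_exp (Real.log x * (1 / γ))
      rw [← Real.rpow_def_of_pos hx0] at this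
      nlinarith
    have hA : 0 ≤ (1 + Λ * x) * Real.exp (-Λ * (1 - x)) := by positivity
    have hAle : (1 + Λ * x) * Real.exp (-Λ * (1 - x)) ≤ 1 + Λ := by
      have h1 : Real.exp (-Λ * (1 - x)) ≤ 1 := by
        apply Real.exp_le_one_iff.mpr; nlinarith
      calc (1 + Λ * x) * Real.exp (-Λ * (1 - x)) ≤ (1 + Λ * x) * 1 := by
            apply mul_le_mul_of_nonneg_left h1; nlinarith
        _ ≤ 1 + Λ := by nlinarith
    have hbig : (γ + 1) * (1 - x ^ (1 / γ)) ≤ 2 * (-Real.log x) := by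
      calc (γ + 1) * (1 - x ^ (1 / γ)) ≤ (γ + 1) * ((1 / γ) * (-Real.log x)) := by
            apply mul_le_mul_of_nonneg_left hkey; positivity
        _ = ((γ + 1) / γ) * (-Real.log x) := by ring
        _ ≤ 2 * (-Real.log x) := by
            apply mul_le_mul_of_nonneg_right _ (by linarith)
            rw [div_le_iff₀ hγ0]; linarith
    have h0 : 0 ≤ 1 - x ^ (1 / γ) := by linarith
    rw [Real.norm_eq_abs, abs_of_nonneg
      (mul_nonneg (by linarith) (mul_nonneg hA h0))]
    calc (γ + 1) * ((1 + Λ * x) * Real.exp (-Λ * (1 - x)) * (1 - x ^ (1 / γ)))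
        ≤ (γ + 1) * ((1 + Λ) * (1 - x ^ (1 / γ))) := by
          apply mul_le_mul_of_nonneg_left _ (by linarith)
          apply mul_le_mul_of_nonneg_right hAle; linarith
      _ = (1 + Λ) * ((γ + 1) * (1 - x ^ (1 / γ))) := by ring
      _ ≤ (1 + Λ) * (2 * (-Real.log x)) := by
          apply mul_le_mul_of_nonneg_left hbig; linarith
  · apply Integrable.const_mul
    exact (log_integrableOn.neg.const_mul 2)
  · filter_upwards [ae_restrict_mem measurableSet_Ioc] with x hx
    have h := key_tendsto hx.1 hx.2
    have := h.const_mul ((1 + Λ * x) * Real.exp (-Λ * (1 - x)))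
    apply this.congr
    intro γ
    ring
end

section
/- Let Λ > 0, ψ ∈ (0,1], and K a positive integer. Define the probability mass function q*(m) ∝ q_M(m+K) · (m+K)!/m! · ψ^m on nonnegative integers m ≥ 0, where q_M is the 1-shifted Poisson(Λ) pmf. Then q* equals the mixture (Λψ/(Λψ+K)) · Pois₁(Λψ) + (K/(Λψ+K)) · Pois(Λψ), where Pois(λ) is the Poisson pmf with parameter λ and Pois₁(λ)(m) = e^(-λ) λ^(m-1)/(m-1)! for m ≥ 1 (and 0 for m = 0). -/
open Real

lemma real_exp_tsum (x : ℝ) : Real.exp x = ∑' n : ℕ, x ^ n / n.factorial := by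
  rw [Real.exp_eq_exp_ℝ, NormedSpace.exp_eq_tsum_div]

lemma sum_shift (x : ℝ) (K : ℕ) :
    ∑' n : ℕ, ((n + K : ℕ) : ℝ) * x ^ n / n.factorial = (x + K) * Real.exp x := by
  have hS1 : Summable (fun n : ℕ => x ^ n / n.factorial) := Real.summable_pow_div_factorial x
  have hSn : Summable (fun n : ℕ => (n : ℝ) * x ^ n / n.factorial) := by
    rw [← summable_nat_add_iff 1]
    apply (hS1.mul_left x).congr
    intro n
    have h1 : (n.factorial : ℝ) ≠ 0 := Nat.cast_ne_zero.mpr n.factorial_ne_zero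
    push_cast [Nat.factorial_succ]
    field_simp
    ring
  have hsum : ∑' n : ℕ, (n : ℝ) * x ^ n / n.factorial = x * Real.exp x := by
    rw [Summable.tsum_eq_zero_add hSn]
    simp only [Nat.cast_zero, zero_mul, zero_div, zero_add]
    have key : ∀ n : ℕ, (((n + 1 : ℕ)) : ℝ) * x ^ (n + 1) / ((n + 1 : ℕ)).factorial
        = x * (x ^ n / n.factorial) := by
      intro n
      have h1 : (n.factorial : ℝ) ≠ 0 := Nat.cast_ne_zero.mpr n.factorial_ne_zero
      rw [Nat.factorial_succ]
      push_cast
      field_simp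
      ring
    rw [tsum_congr key, tsum_mul_left, ← real_exp_tsum]
  have hfe : (fun n : ℕ => ((n + K : ℕ) : ℝ) * x ^ n / n.factorial)
      = fun n : ℕ => (n : ℝ) * x ^ n / n.factorial + (K : ℝ) * (x ^ n / n.factorial) := by
    funext n; push_cast; ring
  rw [hfe, Summable.tsum_add hSn (hS1.mul_left (K:ℝ)), hsum, tsum_mul_left, ← real_exp_tsum]
  ring

/-- With `q_M` the 1-shifted Poisson(Λ) pmf, `ψ ∈ (0,1]` and `K ≥ 1`, the pmf
`q*(m) ∝ q_M(m+K)(m+K)!/m! ψ^m` equals the mixture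
`(Λψ/(Λψ+K)) Pois₁(Λψ) + (K/(Λψ+K)) Pois(Λψ)`. -/
theorem stmt_14 (Λ : ℝ) (hΛ : 0 < Λ) (ψ : ℝ) (hψ : ψ ∈ Set.Ioc (0:ℝ) 1)
    (K : ℕ) (hK : 0 < K)
    (qM : ℕ → ℝ)
    (hqM : ∀ m : ℕ, 1 ≤ m →
      qM m = Real.exp (-Λ) * Λ ^ (m - 1) / (m - 1).factorial)
    (pois pois1 : ℕ → ℝ)
    (hpois : ∀ m : ℕ, pois m = Real.exp (-(Λ * ψ)) * (Λ * ψ) ^ m / m.factorial)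
    (hpois1_zero : pois1 0 = 0)
    (hpois1 : ∀ m : ℕ, 1 ≤ m →
      pois1 m = Real.exp (-(Λ * ψ)) * (Λ * ψ) ^ (m - 1) / (m - 1).factorial) :
    ∀ m : ℕ,
      (qM (m + K) * (((m + K).factorial : ℝ) / (m.factorial : ℝ)) * ψ ^ m) /
          (∑' n : ℕ, qM (n + K) * (((n + K).factorial : ℝ) / (n.factorial : ℝ)) * ψ ^ n)
        = (Λ * ψ / (Λ * ψ + K)) * pois1 m + ((K : ℝ) / (Λ * ψ + K)) * pois m := by
  obtain ⟨hψ0, hψ1⟩ := hψ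
  set x : ℝ := Λ * ψ with hx
  have hx0 : 0 < x := mul_pos hΛ hψ0
  set A : ℝ := Real.exp (-Λ) * Λ ^ (K - 1) with hA
  have hA0 : 0 < A := mul_pos (Real.exp_pos _) (pow_pos hΛ _)
  -- rewrite each term
  have hterm : ∀ m : ℕ,
      qM (m + K) * (((m + K).factorial : ℝ) / (m.factorial : ℝ)) * ψ ^ m
        = A * (((m + K : ℕ) : ℝ) * x ^ m / m.factorial) := by
    intro m
    have h1 : 1 ≤ m + K := by omega
    rw [hqM _ h1]
    have e1 : m + K - 1 + 1 = m + K := by omega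
    have e2 : Λ ^ (m + K - 1) = Λ ^ (K - 1) * Λ ^ m := by
      rw [← pow_add]; congr 1; omega
    have e3 : ((m + K).factorial : ℝ) = ((m + K : ℕ) : ℝ) * ((m + K - 1).factorial : ℝ) := by
      rw [← e1, Nat.factorial_succ]; push_cast [e1]; ring
    have hf1 : ((m + K - 1).factorial : ℝ) ≠ 0 := Nat.cast_ne_zero.mpr (Nat.factorial_ne_zero _)
    have hf2 : (m.factorial : ℝ) ≠ 0 := Nat.cast_ne_zero.mpr (Nat.factorial_ne_zero _)
    rw [e2, e3, hA, hx]
    field_simp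
    ring
  have hden : (∑' n : ℕ, qM (n + K) * (((n + K).factorial : ℝ) / (n.factorial : ℝ)) * ψ ^ n)
      = A * ((x + K) * Real.exp x) := by
    rw [tsum_congr hterm, tsum_mul_left, sum_shift]
  intro m
  rw [hterm, hden, hpois]
  have hxK : x + K ≠ 0 := by positivity
  have hex : Real.exp x ≠ 0 := (Real.exp_pos x).ne'
  have hexp : Real.exp (-x) = (Real.exp x)⁻¹ := Real.exp_neg x
  have hf2 : (m.factorial : ℝ) ≠ 0 := Nat.cast_ne_zero.mpr (Nat.factorial_ne_zero _)
  rcases Nat.eq_zero_or_pos m with rfl | hm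
  · rw [hpois1_zero]
    simp only [pow_zero, Nat.factorial_zero, Nat.cast_one, Nat.zero_add]
    rw [hexp]
    field_simp
    ring
  · rw [hpois1 m hm]
    have e1 : m - 1 + 1 = m := by omega
    have e4 : x ^ m = x * x ^ (m - 1) := by rw [← pow_succ']; congr 1; omega
    have e3 : (m.factorial : ℝ) = (m : ℝ) * ((m - 1).factorial : ℝ) := by
      rw [← e1, Nat.factorial_succ]; push_cast [e1]; ring
    have hf1 : ((m - 1).factorial : ℝ) ≠ 0 := Nat.cast_ne_zero.mpr (Nat.factorial_ne_zero _)
    have hm0 : (m : ℝ) ≠ 0 := Nat.cast_ne_zero.mpr (by omega)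
    rw [hexp, e4, e3]
    push_cast
    field_simp
end
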